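/- Let n ≥ 6, let L be a 3-uniform list assignment of the prism graph Π_n, and let c be a lex-min proper L-coloring of Π_n. Then every color class of c contains at most ⌈2n/3⌉ vertices. -/

import Mathlib

/-- The prism graph `Π_n = C_n □ K_2`, on vertex set `Fin n × Fin 2`:
`(i,j)` is adjacent to `(i',j')` iff `i = i'` and `j ≠ j'`, or `j = j'` and
`i' − i ≡ ±1 (mod n)`. -/
def prism (n : ℕ) : SimpleGraph (Fin n × Fin 2) :=
  SimpleGraph.fromRel (fun v w =>
    (v.1 = w.1 ∧ v.2 ≠ w.2) ∨ (v.2 = w.2 ∧ w.1.val = (v.1.val + 1) % n))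

/-- `c` is a proper `L`-coloring of the prism graph `Π_n`. -/
def IsProperListColoring {n : ℕ} (L : Fin n × Fin 2 → Finset ℕ)
    (c : Fin n × Fin 2 → ℕ) : Prop :=
  (∀ v, c v ∈ L v) ∧ ∀ v w, (prism n).Adj v w → c v ≠ c w

/-- The color class of color `k` under the coloring `c`. -/
def colorClass {n : ℕ} (c : Fin n × Fin 2 → ℕ) (k : ℕ) : Finset (Fin n × Fin 2) :=
  Finset.univ.filter (fun v => c v = k)

/-- The color word of `c`: the sizes of the nonempty color classes of `c`,
listed in decreasing order. -/
def colorWord {n : ℕ} (c : Fin n × Fin 2 → ℕ) : List ℕ :=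
  (((Finset.univ.image c).val.map (fun k => (colorClass c k).card)).sort (· ≤ ·)).reverse

/-- `c` is a lex-min proper `L`-coloring: it is a proper `L`-coloring and no proper
`L`-coloring has a lexicographically smaller color word. -/
def IsLexMin {n : ℕ} (L : Fin n × Fin 2 → Finset ℕ) (c : Fin n × Fin 2 → ℕ) : Prop :=
  IsProperListColoring L c ∧
    ∀ c', IsProperListColoring L c' → ¬ List.Lex (· < ·) (colorWord c') (colorWord c)

namespace PrismAux

/-- color `x` occurs in the pair `p` -/
def pmem (x : ℕ) (p : ℕ × ℕ) : Prop := x = p.1 ∨ x = p.2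

/-- consecutive rungs get compatible pairs -/
def link (p q : ℕ × ℕ) : Prop := q.1 ≠ p.1 ∧ q.2 ≠ p.2

/-- no color common to three pairs -/
def tfree (p q s : ℕ × ℕ) : Prop := ∀ x, ¬(pmem x p ∧ pmem x q ∧ pmem x s)

/-- the strong step relation used while building the chain -/
def SP (p q : ℕ × ℕ) : Prop := q.1 ≠ p.1 ∧ q.1 ≠ p.2 ∧ q.2 ≠ p.2 ∧ q.2 ≠ q.1

/-- a pair is valid at rung `i` -/
def pvalid (F G : ℕ → Finset ℕ) (i : ℕ) (p : ℕ × ℕ) : Prop :=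
  p.1 ∈ F i ∧ p.2 ∈ G i ∧ p.1 ≠ p.2

theorem SP.link {p q : ℕ × ℕ} (h : SP p q) : link p q := ⟨h.1, h.2.2.1⟩

theorem SP_SP_tfree {p q s : ℕ × ℕ} (h1 : SP p q) (h2 : SP q s) : tfree p q s := by
  rintro x ⟨hp, hq, hs⟩
  rcases hq with hq | hq
  · rcases hp with hp | hp
    · exact h1.1 (hq ▸ hp ▸ rfl)
    · exact h1.2.1 (hq ▸ hp ▸ rfl)
  · rcases hp with hp | hp
    · rcases hs with hs | hs
      · exact h2.2.1 (hs ▸ hq ▸ rfl)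
      · exact h2.2.2.1 (hs ▸ hq ▸ rfl)
    · exact h1.2.2.1 (hq ▸ hp ▸ rfl)

theorem pick_avoid2 {s : Finset ℕ} (hs : s.card = 3) (a b : ℕ) :
    ∃ x ∈ s, x ≠ a ∧ x ≠ b := by
  by_contra h
  push_neg at h
  have hsub : s ⊆ {a, b} := by
    intro x hx
    by_cases hxa : x = a
    · simp [hxa]
    · simp [h x hx hxa]
  have h1 := Finset.card_le_card hsub
  have h2 : ({a, b} : Finset ℕ).card ≤ 2 := by
    apply le_trans (Finset.card_insert_le _ _); simp
  omega

theorem pick_avoid1 {s : Finset ℕ} (hs : s.card = 3) (a : ℕ) :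
    ∃ x ∈ s, x ≠ a := by
  obtain ⟨x, hx, hxa, _⟩ := pick_avoid2 hs a a
  exact ⟨x, hx, hxa⟩

/-- from two nonempty sets, pick distinct representatives, unless both are the
same singleton -/
theorem pick_distinct {A B : Finset ℕ} (hA : A.Nonempty) (hB : B.Nonempty)
    (h : ¬∃ w, A = {w} ∧ B = {w}) : ∃ u ∈ A, ∃ v ∈ B, u ≠ v := by
  obtain ⟨u, hu⟩ := hA
  by_cases hBu : ∃ v ∈ B, v ≠ u
  · obtain ⟨v, hv, hvu⟩ := hBu
    exact ⟨u, hu, v, hv, fun he => hvu (he ▸ rfl)⟩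
  · push_neg at hBu
    have hBeq : B = {u} := by
      apply Finset.eq_singleton_iff_nonempty_unique_mem.mpr ⟨hB, hBu⟩
    by_cases hAu : ∃ u' ∈ A, u' ≠ u
    · obtain ⟨u', hu', hne⟩ := hAu
      exact ⟨u', hu', u, by simp [hBeq], hne⟩
    · push_neg at hAu
      have hAeq : A = {u} := Finset.eq_singleton_iff_nonempty_unique_mem.mpr ⟨⟨u, hu⟩, hAu⟩
      exact absurd ⟨u, hAeq, hBeq⟩ h

end PrismAux
namespace PrismAux

theorem mem_mem_of_sdiff_singleton {s : Finset ℕ} (hs : s.card = 3) {c d w : ℕ}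
    (hcd : c ≠ d) (h : s \ {c, d} = {w}) : c ∈ s ∧ d ∈ s ∧ w ∈ s ∧ w ≠ c ∧ w ≠ d := by
  have hw : w ∈ s \ ({c, d} : Finset ℕ) := by rw [h]; exact Finset.mem_singleton_self w
  rw [Finset.mem_sdiff] at hw
  have hwc : w ≠ c := fun he => hw.2 (by simp [he])
  have hwd : w ≠ d := fun he => hw.2 (by simp [he])
  have hcard : (s \ ({c, d} : Finset ℕ)).card = 1 := by rw [h]; simp
  have hsum := Finset.card_sdiff_add_card_inter s ({c, d} : Finset ℕ)
  have hcd2 : ({c, d} : Finset ℕ).card = 2 := by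
    rw [Finset.card_insert_of_notMem (by simp [hcd]), Finset.card_singleton]
  have hsub : s ∩ ({c, d} : Finset ℕ) = ({c, d} : Finset ℕ) :=
    Finset.eq_of_subset_of_card_le Finset.inter_subset_right (by omega)
  have hcds : ({c, d} : Finset ℕ) ⊆ s := by
    rw [← hsub]; exact Finset.inter_subset_left
  exact ⟨hcds (by simp), hcds (by simp), hw.1, hwc, hwd⟩

/-- The seam-closure lemma for the case `3 ∣ n`. -/
theorem W0 {L2 M2 L3 M3 L0 M0 : Finset ℕ}
    (h2 : L2.card = 3) (hm2 : M2.card = 3) (h3 : L3.card = 3) (hm3 : M3.card = 3)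
    (h0 : L0.card = 3) (hm0 : M0.card = 3) (p q a1 b1 : ℕ) (ha1 : a1 ∉ L0) :
    ∃ c d u v α β,
      c ∈ L2 ∧ d ∈ M2 ∧ c ≠ d ∧ c ≠ p ∧ d ≠ q ∧
      u ∈ L3 ∧ v ∈ M3 ∧ u ≠ v ∧ u ≠ c ∧ v ≠ d ∧
      α ∈ L0 ∧ β ∈ M0 ∧ α ≠ β ∧ α ≠ u ∧ β ≠ v ∧ α ≠ a1 ∧ β ≠ b1 ∧
      tfree (c, d) (u, v) (α, β) := by
  obtain ⟨c, hc, hcp⟩ := pick_avoid1 h2 p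
  obtain ⟨d, hd, hdq, hdc⟩ := pick_avoid2 hm2 q c
  have hcd : c ≠ d := fun he => hdc he.symm
  by_cases hW : ∃ w, L3 \ ({c, d} : Finset ℕ) = {w} ∧ M3 \ ({c, d} : Finset ℕ) = {w}
  · obtain ⟨w, hwL, hwM⟩ := hW
    obtain ⟨hcL3, hdL3, hwL3, hwc, hwd⟩ := mem_mem_of_sdiff_singleton h3 hcd hwL
    obtain ⟨hcM3, hdM3, hwM3, _, _⟩ := mem_mem_of_sdiff_singleton hm3 hcd hwM
    by_cases hB1 : ∃ β0 ∈ M0, β0 ≠ w ∧ β0 ≠ b1 ∧ β0 ≠ d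
    · -- case B1 : take (u,v) = (d,w)
      obtain ⟨β, hβ, hβw, hβb1, hβd⟩ := hB1
      obtain ⟨α, hα, hαd, hαβ⟩ := pick_avoid2 h0 d β
      have hαa1 : α ≠ a1 := fun he => ha1 (he ▸ hα)
      refine ⟨c, d, d, w, α, β, hc, hd, hcd, hcp, hdq, hdL3, hwM3,
        by omega, by omega, by omega, hα, hβ, by omega, by omega, by omega,
        hαa1, hβb1, ?_⟩
      rintro x ⟨hx1, hx2, hx3⟩
      simp only [pmem] at hx1 hx2 hx3
      rcases hx1 with rfl | rfl <;> rcases hx2 with h | h <;>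
        rcases hx3 with h' | h' <;> omega
    · -- case B2 : M0 = {w, b1, d}; take (u,v) = (w,c)
      push_neg at hB1
      have hM0sub : M0 ⊆ ({w, b1, d} : Finset ℕ) := by
        intro x hx
        simp only [Finset.mem_insert, Finset.mem_singleton]
        by_cases h1 : x = w
        · exact Or.inl h1
        · by_cases h2' : x = b1
          · exact Or.inr (Or.inl h2')
          · exact Or.inr (Or.inr (hB1 x hx h1 h2'))
      have hM0 : M0 = ({w, b1, d} : Finset ℕ) := by
        apply Finset.eq_of_subset_of_card_le hM0sub
        have h1 : ({w, b1, d} : Finset ℕ).card ≤ 3 := by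
          apply le_trans (Finset.card_insert_le _ _)
          have h2' := Finset.card_insert_le b1 ({d} : Finset ℕ)
          simp only [Finset.card_singleton] at h2'
          omega
        omega
      have hwM0 : w ∈ M0 := by rw [hM0]; simp
      have hdM0 : d ∈ M0 := by rw [hM0]; simp
      have pair_card : ∀ y z : ℕ, ({y, z} : Finset ℕ).card ≤ 2 := fun y z => by
        apply le_trans (Finset.card_insert_le _ _); simp
      have hwb1 : w ≠ b1 := by
        rintro rfl
        have hsub2 : M0 ⊆ ({w, d} : Finset ℕ) := by
          rw [hM0]; intro x hx
          simp only [Finset.mem_insert, Finset.mem_singleton] at hx ⊢; tauto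
        have h1 := Finset.card_le_card hsub2
        have h2' := pair_card w d
        omega
      have hdb1 : d ≠ b1 := by
        rintro rfl
        have hsub2 : M0 ⊆ ({w, d} : Finset ℕ) := by
          rw [hM0]; intro x hx
          simp only [Finset.mem_insert, Finset.mem_singleton] at hx ⊢; tauto
        have h1 := Finset.card_le_card hsub2
        have h2' := pair_card w d
        omega
      obtain ⟨α, hα, hαw, hαc⟩ := pick_avoid2 h0 w c
      have hαa1 : α ≠ a1 := fun he => ha1 (he ▸ hα)
      by_cases hαd : α = d
      · -- β := w
        refine ⟨c, d, w, c, α, w, hc, hd, hcd, hcp, hdq, hwL3, hcM3,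
          by omega, by omega, by omega, hα, hwM0, by omega, by omega, by omega,
          hαa1, hwb1, ?_⟩
        rintro x ⟨hx1, hx2, hx3⟩
        simp only [pmem] at hx1 hx2 hx3
        rcases hx1 with rfl | rfl <;> rcases hx2 with h | h <;>
          rcases hx3 with h' | h' <;> omega
      · -- β := d
        refine ⟨c, d, w, c, α, d, hc, hd, hcd, hcp, hdq, hwL3, hcM3,
          by omega, by omega, by omega, hα, hdM0, by omega, by omega, by omega,
          hαa1, hdb1, ?_⟩
        rintro x ⟨hx1, hx2, hx3⟩
        simp only [pmem] at hx1 hx2 hx3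
        rcases hx1 with rfl | rfl <;> rcases hx2 with h | h <;>
          rcases hx3 with h' | h' <;> omega
  · -- generic case : pick u, v outside {c,d}, then X = ∅
    have hAne : (L3 \ ({c, d} : Finset ℕ)).Nonempty := by
      obtain ⟨x, hx, hxc, hxd⟩ := pick_avoid2 h3 c d
      exact ⟨x, Finset.mem_sdiff.mpr ⟨hx, by simp [hxc, hxd]⟩⟩
    have hBne : (M3 \ ({c, d} : Finset ℕ)).Nonempty := by
      obtain ⟨x, hx, hxc, hxd⟩ := pick_avoid2 hm3 c d
      exact ⟨x, Finset.mem_sdiff.mpr ⟨hx, by simp [hxc, hxd]⟩⟩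
    obtain ⟨u, hu, v, hv, huv⟩ := pick_distinct hAne hBne hW
    rw [Finset.mem_sdiff] at hu hv
    have huc : u ≠ c := fun he => hu.2 (by simp [he])
    have hud : u ≠ d := fun he => hu.2 (by simp [he])
    have hvc : v ≠ c := fun he => hv.2 (by simp [he])
    have hvd : v ≠ d := fun he => hv.2 (by simp [he])
    obtain ⟨β, hβ, hβv, hβb1⟩ := pick_avoid2 hm0 v b1
    obtain ⟨α, hα, hαu, hαβ⟩ := pick_avoid2 h0 u β
    have hαa1 : α ≠ a1 := fun he => ha1 (he ▸ hα)
    refine ⟨c, d, u, v, α, β, hc, hd, hcd, hcp, hdq, hu.1, hv.1,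
      by omega, by omega, by omega, hα, hβ, by omega, by omega, by omega,
      hαa1, hβb1, ?_⟩
    rintro x ⟨hx1, hx2, hx3⟩
    simp only [pmem] at hx1 hx2 hx3
    rcases hx1 with rfl | rfl <;> rcases hx2 with h | h <;>
      rcases hx3 with h' | h' <;> omega

end PrismAux
namespace PrismAux

/-- a system of distinct representatives: enumerations of two 3-sets avoiding
the diagonal -/
theorem sdr {S T : Finset ℕ} (hS : S.card = 3) (hT : T.card = 3) :
    ∃ s1 s2 s3 t1 t2 t3 : ℕ,
      s1 ∈ S ∧ s2 ∈ S ∧ s3 ∈ S ∧ t1 ∈ T ∧ t2 ∈ T ∧ t3 ∈ T ∧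
      s1 ≠ s2 ∧ s1 ≠ s3 ∧ s2 ≠ s3 ∧ t1 ≠ t2 ∧ t1 ≠ t3 ∧ t2 ≠ t3 ∧
      s1 ≠ t1 ∧ s2 ≠ t2 ∧ s3 ≠ t3 := by
  obtain ⟨a, b, c, hab, hac, hbc, hSeq⟩ := Finset.card_eq_three.mp hS
  obtain ⟨x, y, z, hxy, hxz, hyz, hTeq⟩ := Finset.card_eq_three.mp hT
  have haS : a ∈ S := by rw [hSeq]; simp
  have hbS : b ∈ S := by rw [hSeq]; simp
  have hcS : c ∈ S := by rw [hSeq]; simp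
  have hxT : x ∈ T := by rw [hTeq]; simp
  have hyT : y ∈ T := by rw [hTeq]; simp
  have hzT : z ∈ T := by rw [hTeq]; simp
  by_cases hST : S = T
  · -- cyclic shift within S
    refine ⟨a, b, c, b, c, a, haS, hbS, hcS, ?_, ?_, ?_, hab, hac, hbc,
      hbc, ?_, ?_, hab, hbc, ?_⟩
    · rw [← hST]; exact hbS
    · rw [← hST]; exact hcS
    · rw [← hST]; exact haS
    · omega
    · omega
    · omega
  · -- pick σ ∈ S \ T
    have hσ : ∃ σ ∈ S, σ ∉ T := by
      by_contra h
      push_neg at h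
      exact hST (Finset.eq_of_subset_of_card_le h (by omega))
    obtain ⟨σ, hσS, hσT⟩ := hσ
    have hσx : σ ≠ x := fun he => hσT (he ▸ hxT)
    -- get the other two elements of S
    have key : ∃ e2 e3, e2 ∈ S ∧ e3 ∈ S ∧ σ ≠ e2 ∧ σ ≠ e3 ∧ e2 ≠ e3 := by
      have hσ3 : σ = a ∨ σ = b ∨ σ = c := by
        have := hSeq ▸ hσS
        simpa using this
      rcases hσ3 with rfl | rfl | rfl
      · exact ⟨b, c, hbS, hcS, hab, hac, hbc⟩
      · exact ⟨a, c, haS, hcS, fun h => hab h.symm, hbc, hac⟩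
      · exact ⟨a, b, haS, hbS, fun h => hac h.symm, fun h => hbc h.symm, fun h => hab h⟩
    obtain ⟨e2, e3, he2S, he3S, hσ2, hσ3, he23⟩ := key
    by_cases h2x2 : e2 ≠ y ∧ e3 ≠ z
    · exact ⟨σ, e2, e3, x, y, z, hσS, he2S, he3S, hxT, hyT, hzT,
        hσ2, hσ3, he23, hxy, hxz, hyz, hσx, h2x2.1, h2x2.2⟩
    · -- use (x, z, y) on the T side
      push_neg at h2x2
      have h1 : e2 ≠ z ∧ e3 ≠ y := by
        by_cases he2y : e2 = y
        · exact ⟨fun h => hyz (he2y.symm.trans h), fun h => he23 (he2y.trans h.symm)⟩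
        · have he3z : e3 = z := h2x2 he2y
          exact ⟨fun h => he23 (h.trans he3z.symm), fun h => hyz (he3z ▸ h.symm)⟩
      exact ⟨σ, e2, e3, x, z, y, hσS, he2S, he3S, hxT, hzT, hyT,
        hσ2, hσ3, he23, hxz, hxy, fun h => hyz h.symm, hσx, h1.1, h1.2⟩

/-- building the chain of pairs along rungs `1, 2, ..., m+1` -/
theorem chain_exists (F G : ℕ → Finset ℕ) (hF : ∀ i, (F i).card = 3)
    (hG : ∀ i, (G i).card = 3) (start : ℕ × ℕ) (hstart : pvalid F G 1 start) (m : ℕ) :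
    ∃ Q : ℕ → ℕ × ℕ, Q 0 = start ∧ (∀ j ≤ m, pvalid F G (j + 1) (Q j)) ∧
      (∀ j < m, SP (Q j) (Q (j + 1))) := by
  induction m with
  | zero =>
    refine ⟨fun _ => start, rfl, ?_, by omega⟩
    intro j hj
    interval_cases j
    exact hstart
  | succ m ih =>
    obtain ⟨Q, hQ0, hQv, hQs⟩ := ih
    obtain ⟨a, ha, ha1, ha2⟩ := pick_avoid2 (hF (m + 2)) (Q m).1 (Q m).2
    obtain ⟨b, hb, hb1, hb2⟩ := pick_avoid2 (hG (m + 2)) (Q m).2 a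
    refine ⟨Function.update Q (m + 1) (a, b), ?_, ?_, ?_⟩
    · rw [Function.update_of_ne (by omega)]; exact hQ0
    · intro j hj
      rcases Nat.lt_or_ge j (m + 1) with h | h
      · rw [Function.update_of_ne (by omega)]
        exact hQv j (by omega)
      · have : j = m + 1 := by omega
        subst this
        rw [Function.update_self]
        exact ⟨ha, hb, fun he => hb2 he.symm⟩
    · intro j hj
      rcases Nat.lt_or_ge j m with h | h
      · rw [Function.update_of_ne (by omega), Function.update_of_ne (by omega)]
        exact hQs j h
      · have : j = m := by omega
        subst this
        rw [Function.update_of_ne (by omega), Function.update_self]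
        exact ⟨ha1, ha2, hb1, hb2⟩

end PrismAux
namespace PrismAux

/-- the certificate: a cyclic sequence of valid pairs that is properly linked and
whose designated blocks of three consecutive rungs have no common color -/
def Cert (F G : ℕ → Finset ℕ) (n : ℕ) (P : ℕ → ℕ × ℕ) : Prop :=
  (∀ i < n, pvalid F G i (P i)) ∧
  (∀ i, i + 1 < n → link (P i) (P (i + 1))) ∧
  link (P (n - 1)) (P 0) ∧
  (∀ j, 3 * j + 3 < n → tfree (P (3 * j + 1)) (P (3 * j + 2)) (P (3 * j + 3))) ∧
  (n % 3 = 0 → tfree (P (n - 2)) (P (n - 1)) (P 0))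

theorem Cert.swap {F G : ℕ → Finset ℕ} {n : ℕ} {P : ℕ → ℕ × ℕ}
    (h : Cert F G n P) : Cert G F n (fun i => ((P i).2, (P i).1)) := by
  obtain ⟨h1, h2, h3, h4, h5⟩ := h
  have hpm : ∀ x p, pmem x ((p : ℕ × ℕ).2, p.1) ↔ pmem x p := by
    intro x p; unfold pmem; exact or_comm
  refine ⟨?_, ?_, ⟨h3.2, h3.1⟩, ?_, ?_⟩
  · intro i hi
    obtain ⟨ha, hb, hab⟩ := h1 i hi
    exact ⟨hb, ha, fun he => hab he.symm⟩
  · intro i hi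
    exact ⟨(h2 i hi).2, (h2 i hi).1⟩
  · intro j hj x hx
    exact h4 j hj x ⟨(hpm _ _).mp hx.1, (hpm _ _).mp hx.2.1, (hpm _ _).mp hx.2.2⟩
  · intro hr x hx
    exact h5 hr x ⟨(hpm _ _).mp hx.1, (hpm _ _).mp hx.2.1, (hpm _ _).mp hx.2.2⟩

/-- the uniform case: all rungs have the same pair of lists -/
theorem exists_cert_unif (n : ℕ) (hn : 6 ≤ n) (F G : ℕ → Finset ℕ)
    (hF : ∀ i, (F i).card = 3) (hG : ∀ i, (G i).card = 3)
    (hunif : ∀ i, F i = F 0 ∧ G i = G 0) : ∃ P, Cert F G n P := by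
  obtain ⟨s1, s2, s3, t1, t2, t3, hs1, hs2, hs3, ht1, ht2, ht3,
    hs12, hs13, hs23, ht12, ht13, ht23, h11, h22, h33⟩ := sdr (hF 0) (hG 0)
  set pat : ℕ → ℕ × ℕ :=
    fun j => if j = 0 then (s1, t1) else if j = 1 then (s2, t2) else (s3, t3) with hpat
  have hpat0 : pat 0 = (s1, t1) := by simp [hpat]
  have hpat1 : pat 1 = (s2, t2) := by simp [hpat]
  have hpat2 : pat 2 = (s3, t3) := by simp [hpat]
  have hvalpat : ∀ j, j < 3 → ∀ i, pvalid F G i (pat j) := by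
    intro j hj i
    have hFi := (hunif i).1
    have hGi := (hunif i).2
    interval_cases j
    · rw [hpat0]; exact ⟨hFi ▸ hs1, hGi ▸ ht1, h11⟩
    · rw [hpat1]; exact ⟨hFi ▸ hs2, hGi ▸ ht2, h22⟩
    · rw [hpat2]; exact ⟨hFi ▸ hs3, hGi ▸ ht3, h33⟩
  have hlinkpat : ∀ j j', j < 3 → j' < 3 → j ≠ j' → link (pat j) (pat j') := by
    intro j j' hj hj' hne
    interval_cases j <;> interval_cases j' <;>
      simp only [hpat0, hpat1, hpat2, link] <;> omega
  have htfreepat : tfree (pat 1) (pat 2) (pat 0) := by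
    rintro x ⟨hx1, hx2, hx3⟩
    rw [hpat1] at hx1; rw [hpat2] at hx2; rw [hpat0] at hx3
    simp only [pmem] at hx1 hx2 hx3
    rcases hx1 with rfl | rfl <;> rcases hx2 with h | h <;>
      rcases hx3 with h' | h' <;> omega
  set z0 : ℕ := if n % 3 = 1 then 2 else 0 with hz0
  have hz03 : z0 < 3 := by rw [hz0]; split <;> omega
  set P : ℕ → ℕ × ℕ := fun i => if i = 0 then pat z0 else pat (i % 3) with hPdef
  have hP0 : P 0 = pat z0 := by simp [hPdef]
  have hPpos : ∀ i, i ≠ 0 → P i = pat (i % 3) := by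
    intro i h; simp [hPdef, h]
  refine ⟨P, ?_, ?_, ?_, ?_, ?_⟩
  · intro i _
    by_cases h : i = 0
    · subst h; rw [hP0]; exact hvalpat z0 hz03 0
    · rw [hPpos i h]; exact hvalpat _ (Nat.mod_lt _ (by omega)) i
  · intro i hi
    by_cases h : i = 0
    · subst h
      rw [hP0, hPpos 1 (by omega)]
      exact hlinkpat z0 (1 % 3) hz03 (by omega) (by rw [hz0]; split <;> omega)
    · rw [hPpos i h, hPpos (i + 1) (by omega)]
      exact hlinkpat _ _ (Nat.mod_lt _ (by omega)) (Nat.mod_lt _ (by omega)) (by omega)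
  · rw [hP0, hPpos (n - 1) (by omega)]
    refine hlinkpat _ _ (Nat.mod_lt _ (by omega)) hz03 ?_
    rw [hz0]; split <;> omega
  · intro j hj
    rw [hPpos (3 * j + 1) (by omega), hPpos (3 * j + 2) (by omega),
      hPpos (3 * j + 3) (by omega)]
    have e1 : (3 * j + 1) % 3 = 1 := by omega
    have e2 : (3 * j + 2) % 3 = 2 := by omega
    have e3 : (3 * j + 3) % 3 = 0 := by omega
    rw [e1, e2, e3]
    exact htfreepat
  · intro hr
    rw [hP0, hPpos (n - 2) (by omega), hPpos (n - 1) (by omega)]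
    have e1 : (n - 2) % 3 = 1 := by omega
    have e2 : (n - 1) % 3 = 2 := by omega
    have e3 : z0 = 0 := by rw [hz0]; split <;> omega
    rw [e1, e2, e3]
    exact htfreepat

end PrismAux
namespace PrismAux

/-- the generic case: the list of rung 1 (first column) is not contained in that
of rung 0 -/
theorem exists_cert_trick (n : ℕ) (hn : 6 ≤ n) (F G : ℕ → Finset ℕ)
    (hF : ∀ i, (F i).card = 3) (hG : ∀ i, (G i).card = 3)
    (htrick : ¬ F 1 ⊆ F 0) : ∃ P, Cert F G n P := by
  obtain ⟨a1, ha1F, ha1⟩ := Finset.not_subset.mp htrick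
  obtain ⟨b1, hb1, hb1a⟩ := pick_avoid1 (hG 1) a1
  have hstart : pvalid F G 1 (a1, b1) := ⟨ha1F, hb1, fun h => hb1a h.symm⟩
  by_cases hr : n % 3 = 0
  · -- case 3 ∣ n : chain on rungs 1..n-3, then W0 for rungs n-2, n-1, 0
    obtain ⟨Q, hQ0, hQv, hQs⟩ := chain_exists F G hF hG (a1, b1) hstart (n - 4)
    obtain ⟨c, d, u, v, α, β, hc, hd, hcd, hcp, hdq, hu, hv, huv, huc, hvd,
      hα, hβ, hαβ, hαu, hβv, hαa1, hβb1, htf⟩ :=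
      W0 (hF (n - 2)) (hG (n - 2)) (hF (n - 1)) (hG (n - 1)) (hF 0) (hG 0)
        (Q (n - 4)).1 (Q (n - 4)).2 a1 b1 ha1
    set P : ℕ → ℕ × ℕ := fun i =>
      if i = 0 then (α, β) else if i = n - 2 then (c, d)
      else if i = n - 1 then (u, v) else Q (i - 1) with hPdef
    have hP0 : P 0 = (α, β) := by simp [hPdef]
    have hPn2 : P (n - 2) = (c, d) := by
      simp [hPdef, show ¬(n - 2 = 0) by omega]
    have hPn1 : P (n - 1) = (u, v) := by
      simp [hPdef, show ¬(n - 1 = 0) by omega, show ¬(n - 1 = n - 2) by omega]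
    have hPmid : ∀ i, 1 ≤ i → i ≤ n - 3 → P i = Q (i - 1) := by
      intro i h1 h2
      simp [hPdef, show ¬(i = 0) by omega, show ¬(i = n - 2) by omega,
        show ¬(i = n - 1) by omega]
    refine ⟨P, ?_, ?_, ?_, ?_, ?_⟩
    · -- validity
      intro i hi
      by_cases h0 : i = 0
      · subst h0; rw [hP0]; exact ⟨hα, hβ, hαβ⟩
      · by_cases h2 : i = n - 2
        · subst h2; rw [hPn2]; exact ⟨hc, hd, hcd⟩
        · by_cases h1 : i = n - 1
          · subst h1; rw [hPn1]; exact ⟨hu, hv, huv⟩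
          · rw [hPmid i (by omega) (by omega)]
            have := hQv (i - 1) (by omega)
            have he : i - 1 + 1 = i := by omega
            rwa [he] at this
    · -- links along the path
      intro i hi
      by_cases h0 : i = 0
      · subst h0
        rw [hP0, hPmid 1 (by omega) (by omega), hQ0]
        show a1 ≠ α ∧ b1 ≠ β
        exact ⟨fun he => ha1 (by rw [he]; exact hα), fun he => hβb1 he.symm⟩
      · by_cases h3 : i = n - 3
        · subst h3
          rw [show n - 3 + 1 = n - 2 by omega, hPmid (n - 3) (by omega) (by omega),
            hPn2, show n - 3 - 1 = n - 4 by omega]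
          exact ⟨hcp, hdq⟩
        · by_cases h2 : i = n - 2
          · subst h2
            rw [show n - 2 + 1 = n - 1 by omega, hPn2, hPn1]
            exact ⟨huc, hvd⟩
          · -- 1 ≤ i ≤ n - 4 : chain links
            rw [hPmid i (by omega) (by omega), hPmid (i + 1) (by omega) (by omega)]
            have he : i + 1 - 1 = i - 1 + 1 := by omega
            rw [he]
            exact (hQs (i - 1) (by omega)).link
    · -- seam link
      rw [hPn1, hP0]
      exact ⟨hαu, hβv⟩
    · -- blocks
      intro j hj
      rw [hPmid (3 * j + 1) (by omega) (by omega),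
        hPmid (3 * j + 2) (by omega) (by omega),
        hPmid (3 * j + 3) (by omega) (by omega)]
      have e1 : 3 * j + 1 - 1 = 3 * j := by omega
      have e2 : 3 * j + 2 - 1 = 3 * j + 1 := by omega
      have e3 : 3 * j + 3 - 1 = 3 * j + 1 + 1 := by omega
      rw [e1, e2, e3]
      exact SP_SP_tfree (hQs (3 * j) (by omega)) (hQs (3 * j + 1) (by omega))
    · -- wrap block
      intro _
      rw [hPn2, hPn1, hP0]
      exact htf
  · -- case n % 3 ∈ {1, 2} : chain on rungs 1..n-1, close at rung 0
    obtain ⟨Q, hQ0, hQv, hQs⟩ := chain_exists F G hF hG (a1, b1) hstart (n - 2)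
    obtain ⟨β, hβ, hβ1, hβ2⟩ := pick_avoid2 (hG 0) (Q (n - 2)).2 b1
    obtain ⟨α, hα, hα1, hα2⟩ := pick_avoid2 (hF 0) (Q (n - 2)).1 β
    set P : ℕ → ℕ × ℕ := fun i => if i = 0 then (α, β) else Q (i - 1) with hPdef
    have hP0 : P 0 = (α, β) := by simp [hPdef]
    have hPmid : ∀ i, 1 ≤ i → P i = Q (i - 1) := by
      intro i h1
      simp [hPdef, show ¬(i = 0) by omega]
    refine ⟨P, ?_, ?_, ?_, ?_, ?_⟩
    · intro i hi
      by_cases h0 : i = 0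
      · subst h0; rw [hP0]; exact ⟨hα, hβ, hα2⟩
      · rw [hPmid i (by omega)]
        have := hQv (i - 1) (by omega)
        have he : i - 1 + 1 = i := by omega
        rwa [he] at this
    · intro i hi
      by_cases h0 : i = 0
      · subst h0
        rw [hP0, hPmid 1 (by omega), hQ0]
        show a1 ≠ α ∧ b1 ≠ β
        exact ⟨fun he => ha1 (by rw [he]; exact hα), fun he => hβ2 he.symm⟩
      · rw [hPmid i (by omega), hPmid (i + 1) (by omega)]
        have he : i + 1 - 1 = i - 1 + 1 := by omega
        rw [he]
        exact (hQs (i - 1) (by omega)).link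
    · rw [hPmid (n - 1) (by omega), hP0]
      have he : n - 1 - 1 = n - 2 := by omega
      rw [he]
      exact ⟨hα1, hβ1⟩
    · intro j hj
      rw [hPmid (3 * j + 1) (by omega), hPmid (3 * j + 2) (by omega),
        hPmid (3 * j + 3) (by omega)]
      have e1 : 3 * j + 1 - 1 = 3 * j := by omega
      have e2 : 3 * j + 2 - 1 = 3 * j + 1 := by omega
      have e3 : 3 * j + 3 - 1 = 3 * j + 1 + 1 := by omega
      rw [e1, e2, e3]
      exact SP_SP_tfree (hQs (3 * j) (by omega)) (hQs (3 * j + 1) (by omega))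
    · intro h; exact absurd h hr

end PrismAux
namespace PrismAux

theorem triple_card {S : Finset ℕ} {x y z : ℕ} (hxy : x ≠ y) (hxz : x ≠ z)
    (hyz : y ≠ z) (h : ¬(x ∈ S ∧ y ∈ S ∧ z ∈ S)) :
    (S ∩ ({x, y, z} : Finset ℕ)).card ≤ 2 := by
  by_contra hcon
  push_neg at hcon
  have hT : ({x, y, z} : Finset ℕ).card = 3 := by
    rw [Finset.card_insert_of_notMem (by simp [hxy, hxz]),
      Finset.card_insert_of_notMem (by simp [hyz]), Finset.card_singleton]
  have heq : S ∩ ({x, y, z} : Finset ℕ) = ({x, y, z} : Finset ℕ) :=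
    Finset.eq_of_subset_of_card_le Finset.inter_subset_right (by omega)
  have hsub : ({x, y, z} : Finset ℕ) ⊆ S := by
    rw [← heq]; exact Finset.inter_subset_left
  exact h ⟨hsub (by simp), hsub (by simp), hsub (by simp)⟩

theorem count_blocks {S : Finset ℕ} (t : ℕ)
    (hb : ∀ j < t, ¬(3 * j + 1 ∈ S ∧ 3 * j + 2 ∈ S ∧ 3 * j + 3 ∈ S)) :
    (S ∩ Finset.Icc 1 (3 * t)).card ≤ 2 * t := by
  induction t with
  | zero =>
    have : Finset.Icc 1 (3 * 0) = (∅ : Finset ℕ) := by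
      apply Finset.Icc_eq_empty; omega
    simp [this]
  | succ t ih =>
    have hsub : S ∩ Finset.Icc 1 (3 * (t + 1)) ⊆
        (S ∩ Finset.Icc 1 (3 * t)) ∪ (S ∩ ({3 * t + 1, 3 * t + 2, 3 * t + 3} : Finset ℕ)) := by
      intro x hx
      simp only [Finset.mem_inter, Finset.mem_Icc, Finset.mem_union,
        Finset.mem_insert, Finset.mem_singleton] at hx ⊢
      obtain ⟨hxS, hx1, hx2⟩ := hx
      by_cases h : x ≤ 3 * t
      · exact Or.inl ⟨hxS, hx1, h⟩
      · exact Or.inr ⟨hxS, by omega⟩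
    have h1 := Finset.card_le_card hsub
    have h2 := Finset.card_union_le (S ∩ Finset.Icc 1 (3 * t))
      (S ∩ ({3 * t + 1, 3 * t + 2, 3 * t + 3} : Finset ℕ))
    have h3 := ih (fun j hj => hb j (by omega))
    have h4 : (S ∩ ({3 * t + 1, 3 * t + 2, 3 * t + 3} : Finset ℕ)).card ≤ 2 :=
      triple_card (by omega) (by omega) (by omega) (hb t (by omega))
    omega

theorem count_bound (n : ℕ) (hn : 6 ≤ n) (S : Finset ℕ) (hS : S ⊆ Finset.range n)
    (hb : ∀ j, 3 * j + 3 < n → ¬(3 * j + 1 ∈ S ∧ 3 * j + 2 ∈ S ∧ 3 * j + 3 ∈ S))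
    (hw : n % 3 = 0 → ¬(n - 2 ∈ S ∧ n - 1 ∈ S ∧ 0 ∈ S)) :
    S.card ≤ 2 * (n / 3) + n % 3 := by
  by_cases hr : n % 3 = 0
  · -- wrap case
    have hsub : S ⊆ (S ∩ Finset.Icc 1 (3 * (n / 3 - 1))) ∪
        (S ∩ ({n - 2, n - 1, 0} : Finset ℕ)) := by
      intro x hx
      have hxn : x < n := Finset.mem_range.mp (hS hx)
      simp only [Finset.mem_union, Finset.mem_inter, Finset.mem_Icc,
        Finset.mem_insert, Finset.mem_singleton]
      by_cases h : 1 ≤ x ∧ x ≤ 3 * (n / 3 - 1)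
      · exact Or.inl ⟨hx, h⟩
      · exact Or.inr ⟨hx, by omega⟩
    have h1 := Finset.card_le_card hsub
    have h2 := Finset.card_union_le (S ∩ Finset.Icc 1 (3 * (n / 3 - 1)))
      (S ∩ ({n - 2, n - 1, 0} : Finset ℕ))
    have h3 := count_blocks (S := S) (n / 3 - 1) (fun j hj => hb j (by omega))
    have h4 : (S ∩ ({n - 2, n - 1, 0} : Finset ℕ)).card ≤ 2 :=
      triple_card (by omega) (by omega) (by omega) (hw hr)
    omega
  · by_cases hr1 : n % 3 = 1
    · have hsub : S ⊆ (S ∩ Finset.Icc 1 (3 * (n / 3))) ∪ ({0} : Finset ℕ) := by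
        intro x hx
        have hxn : x < n := Finset.mem_range.mp (hS hx)
        simp only [Finset.mem_union, Finset.mem_inter, Finset.mem_Icc,
          Finset.mem_singleton]
        by_cases h : x = 0
        · exact Or.inr h
        · exact Or.inl ⟨hx, by omega⟩
      have h1 := Finset.card_le_card hsub
      have h2 := Finset.card_union_le (S ∩ Finset.Icc 1 (3 * (n / 3))) ({0} : Finset ℕ)
      have h3 := count_blocks (S := S) (n / 3) (fun j hj => hb j (by omega))
      have h4 : ({0} : Finset ℕ).card = 1 := Finset.card_singleton 0
      omega
    · -- n % 3 = 2
      have hsub : S ⊆ (S ∩ Finset.Icc 1 (3 * (n / 3))) ∪ ({0, n - 1} : Finset ℕ) := by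
        intro x hx
        have hxn : x < n := Finset.mem_range.mp (hS hx)
        simp only [Finset.mem_union, Finset.mem_inter, Finset.mem_Icc,
          Finset.mem_insert, Finset.mem_singleton]
        by_cases h : x = 0 ∨ x = n - 1
        · exact Or.inr h
        · push_neg at h
          exact Or.inl ⟨hx, by omega⟩
      have h1 := Finset.card_le_card hsub
      have h2 := Finset.card_union_le (S ∩ Finset.Icc 1 (3 * (n / 3))) ({0, n - 1} : Finset ℕ)
      have h3 := count_blocks (S := S) (n / 3) (fun j hj => hb j (by omega))
      have h4 : ({0, n - 1} : Finset ℕ).card ≤ 2 := by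
        apply le_trans (Finset.card_insert_le _ _); simp
      omega

theorem shift_id {n z a : ℕ} (hz : z ≤ n) (ha : a < n) :
    (z + (a + (n - z)) % n) % n = a := by
  rw [Nat.add_mod_mod, show z + (a + (n - z)) = a + n by omega, Nat.add_mod_right]
  exact Nat.mod_eq_of_lt ha

theorem shift_succ {n z a : ℕ} : ((a + 1) % n + (n - z)) % n = ((a + (n - z)) % n + 1) % n := by
  rw [Nat.mod_add_mod, Nat.mod_add_mod, show a + 1 + (n - z) = a + (n - z) + 1 by omega]

theorem fin2cases (j : Fin 2) : j = 0 ∨ j = 1 := by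
  rcases j with ⟨jv, hj⟩
  interval_cases jv
  · exact Or.inl rfl
  · exact Or.inr rfl

end PrismAux
namespace PrismAux

theorem transfer (n : ℕ) (hn : 6 ≤ n) (L : Fin n × Fin 2 → Finset ℕ)
    (z : ℕ) (hz : z < n) (P : ℕ → ℕ × ℕ) (F G : ℕ → Finset ℕ)
    (hFL : ∀ i : Fin n, F ((i.val + (n - z)) % n) = L (i, 0))
    (hGL : ∀ i : Fin n, G ((i.val + (n - z)) % n) = L (i, 1))
    (hc : Cert F G n P) :
    ∃ c', IsProperListColoring L c' ∧
      ∀ χ, (colorClass c' χ).card ≤ 2 * (n / 3) + n % 3 := by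
  classical
  have h0 : 0 < n := by omega
  set m : Fin n → ℕ := fun i => (i.val + (n - z)) % n with hm
  have hmlt : ∀ i, m i < n := fun i => Nat.mod_lt _ h0
  have hmid : ∀ i : Fin n, (z + m i) % n = i.val :=
    fun i => shift_id (by omega) i.isLt
  have hminj : ∀ i i' : Fin n, m i = m i' → i = i' := by
    intro i i' h
    have h1 := hmid i
    rw [h, hmid i'] at h1
    exact Fin.ext h1.symm
  set c' : Fin n × Fin 2 → ℕ :=
    fun v => if v.2 = (0 : Fin 2) then (P (m v.1)).1 else (P (m v.1)).2 with hc'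
  have hcv0 : ∀ i : Fin n, c' (i, 0) = (P (m i)).1 := fun i => by simp [hc']
  have hcv1 : ∀ i : Fin n, c' (i, 1) = (P (m i)).2 := fun i => by
    simp only [hc']
    rw [if_neg (by decide)]
  have hval : ∀ i : Fin n, pvalid F G (m i) (P (m i)) := fun i => hc.1 (m i) (hmlt i)
  -- membership
  have hmem : ∀ v, c' v ∈ L v := by
    rintro ⟨i, j⟩
    rcases fin2cases j with rfl | rfl
    · rw [hcv0 i, ← hFL i]
      exact (hval i).1
    · rw [hcv1 i, ← hGL i]
      exact (hval i).2.1
  -- the two kinds of adjacency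
  have hsame : ∀ (i : Fin n) (j j' : Fin 2), j ≠ j' → c' (i, j) ≠ c' (i, j') := by
    intro i j j' hjj
    rcases fin2cases j with rfl | rfl <;> rcases fin2cases j' with rfl | rfl
    · exact absurd rfl hjj
    · rw [hcv0 i, hcv1 i]; exact (hval i).2.2
    · rw [hcv0 i, hcv1 i]; exact fun h => (hval i).2.2 h.symm
    · exact absurd rfl hjj
  have hstep : ∀ (i i' : Fin n) (j : Fin 2), i'.val = (i.val + 1) % n →
      c' (i, j) ≠ c' (i', j) := by
    intro i i' j hii
    have hmsucc : m i' = (m i + 1) % n := by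
      simp only [hm]
      rw [hii]
      exact shift_succ
    have hlink : link (P (m i)) (P (m i')) := by
      by_cases hlast : m i = n - 1
      · have : m i' = 0 := by rw [hmsucc, hlast, show n - 1 + 1 = n by omega, Nat.mod_self]
        rw [this, hlast]
        exact hc.2.2.1
      · have : m i' = m i + 1 := by
          rw [hmsucc]
          exact Nat.mod_eq_of_lt (by have := hmlt i; omega)
        rw [this]
        exact hc.2.1 (m i) (by have := hmlt i; omega)
    rcases fin2cases j with rfl | rfl
    · rw [hcv0 i, hcv0 i']
      exact fun h => hlink.1 h.symm
    · rw [hcv1 i, hcv1 i']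
      exact fun h => hlink.2 h.symm
  have hproper : IsProperListColoring L c' := by
    refine ⟨hmem, ?_⟩
    intro v w hadj
    rw [prism, SimpleGraph.fromRel_adj] at hadj
    obtain ⟨hvw, hrel⟩ := hadj
    rcases hrel with (⟨h1, h2⟩ | ⟨h1, h2⟩) | (⟨h1, h2⟩ | ⟨h1, h2⟩)
    · have := hsame v.1 v.2 w.2 h2
      rw [show ((v.1 : Fin n), v.2) = v from rfl, h1] at this
      rwa [show ((w.1 : Fin n), w.2) = w from rfl] at this
    · have := hstep v.1 w.1 v.2 h2
      rw [show ((v.1 : Fin n), v.2) = v from rfl, h1] at this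
      rwa [show ((w.1 : Fin n), w.2) = w from rfl] at this
    · have := hsame w.1 w.2 v.2 h2
      rw [show ((w.1 : Fin n), w.2) = w from rfl, h1] at this
      rw [show ((v.1 : Fin n), v.2) = v from rfl] at this
      exact this.symm
    · have := hstep w.1 v.1 w.2 h2
      rw [show ((w.1 : Fin n), w.2) = w from rfl, h1] at this
      rw [show ((v.1 : Fin n), v.2) = v from rfl] at this
      exact this.symm
  refine ⟨c', hproper, ?_⟩
  intro χ
  set S : Finset ℕ := (Finset.range n).filter (fun a => χ = (P a).1 ∨ χ = (P a).2)
    with hSdef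
  have hcard : (colorClass c' χ).card ≤ S.card := by
    apply Finset.card_le_card_of_injOn (fun v => m v.1)
    · rintro ⟨i, j⟩ hv
      rw [Finset.mem_coe, colorClass, Finset.mem_filter] at hv
      rw [Finset.mem_coe, hSdef, Finset.mem_filter]
      refine ⟨Finset.mem_range.mpr (hmlt i), ?_⟩
      rcases fin2cases j with rfl | rfl
      · rw [hcv0 i] at hv
        exact Or.inl hv.2.symm
      · rw [hcv1 i] at hv
        exact Or.inr hv.2.symm
    · rintro ⟨i, j⟩ hv ⟨i', j'⟩ hv' hmm
      simp only [Set.mem_setOf_eq, Finset.coe_filter, colorClass] at hv hv'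
      have hii : i = i' := hminj i i' hmm
      subst hii
      by_cases hjj : j = j'
      · rw [hjj]
      · exfalso
        have := hsame i j j' hjj
        rw [hv.2, hv'.2] at this
        exact this rfl
  have hSbound : S.card ≤ 2 * (n / 3) + n % 3 := by
    apply count_bound n hn S (Finset.filter_subset _ _)
    · intro j hj hcon
      obtain ⟨m1, m2, m3⟩ := hcon
      rw [hSdef, Finset.mem_filter] at m1 m2 m3
      exact hc.2.2.2.1 j hj χ ⟨m1.2, m2.2, m3.2⟩
    · intro hr hcon
      obtain ⟨m1, m2, m3⟩ := hcon
      rw [hSdef, Finset.mem_filter] at m1 m2 m3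
      exact hc.2.2.2.2 hr χ ⟨m1.2, m2.2, m3.2⟩
  omega

end PrismAux
namespace PrismAux

theorem exists_good (n : ℕ) (hn : 6 ≤ n) (L : Fin n × Fin 2 → Finset ℕ)
    (hL : ∀ v, (L v).card = 3) :
    ∃ c', IsProperListColoring L c' ∧
      ∀ χ, (colorClass c' χ).card ≤ 2 * (n / 3) + n % 3 := by
  classical
  have h0 : 0 < n := by omega
  set Lf : ℕ → Finset ℕ := fun a => L (⟨a % n, Nat.mod_lt _ h0⟩, 0) with hLf
  set Lg : ℕ → Finset ℕ := fun a => L (⟨a % n, Nat.mod_lt _ h0⟩, 1) with hLg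
  have hLfc : ∀ i, (Lf i).card = 3 := fun i => hL _
  have hLgc : ∀ i, (Lg i).card = 3 := fun i => hL _
  -- generic correspondence for any rotation z < n
  have hcorr : ∀ z, z < n → ∀ i : Fin n,
      (⟨(z + (i.val + (n - z)) % n) % n, Nat.mod_lt _ h0⟩ : Fin n) = i := by
    intro z hzn i
    exact Fin.ext (shift_id (by omega) i.isLt)
  by_cases hdiff : ∃ zz, zz < n ∧ (¬ Lf (zz + 1) ⊆ Lf zz ∨ ¬ Lg (zz + 1) ⊆ Lg zz)
  · obtain ⟨z, hzn, hside⟩ := hdiff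
    have hFL : ∀ i : Fin n, (fun i => Lf (z + i)) ((i.val + (n - z)) % n) = L (i, 0) := by
      intro i
      show Lf (z + (i.val + (n - z)) % n) = L (i, 0)
      rw [hLf]
      show L (⟨(z + (i.val + (n - z)) % n) % n, _⟩, 0) = L (i, 0)
      rw [hcorr z hzn i]
    have hGL : ∀ i : Fin n, (fun i => Lg (z + i)) ((i.val + (n - z)) % n) = L (i, 1) := by
      intro i
      show Lg (z + (i.val + (n - z)) % n) = L (i, 1)
      rw [hLg]
      show L (⟨(z + (i.val + (n - z)) % n) % n, _⟩, 1) = L (i, 1)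
      rw [hcorr z hzn i]
    rcases hside with hsF | hsG
    · obtain ⟨P, hP⟩ := exists_cert_trick n hn (fun i => Lf (z + i)) (fun i => Lg (z + i))
        (fun i => hLfc _) (fun i => hLgc _) hsF
      exact transfer n hn L z hzn P _ _ hFL hGL hP
    · obtain ⟨P, hP⟩ := exists_cert_trick n hn (fun i => Lg (z + i)) (fun i => Lf (z + i))
        (fun i => hLgc _) (fun i => hLfc _) hsG
      exact transfer n hn L z hzn _ _ _ hFL hGL hP.swap
  · -- uniform case
    push_neg at hdiff
    have hstepf : ∀ zz, zz < n → Lf (zz + 1) = Lf zz ∧ Lg (zz + 1) = Lg zz := by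
      intro zz hzz
      obtain ⟨h1, h2⟩ := hdiff zz hzz
      constructor
      · exact Finset.eq_of_subset_of_card_le h1 (by rw [hLfc, hLfc])
      · exact Finset.eq_of_subset_of_card_le h2 (by rw [hLgc, hLgc])
    have hlt : ∀ i, i < n → Lf i = Lf 0 ∧ Lg i = Lg 0 := by
      intro i
      induction i with
      | zero => intro _; exact ⟨rfl, rfl⟩
      | succ i ih =>
        intro hi
        have h1 := hstepf i (by omega)
        have h2 := ih (by omega)
        exact ⟨h1.1.trans h2.1, h1.2.trans h2.2⟩
    have hmodper : ∀ i, Lf i = Lf (i % n) ∧ Lg i = Lg (i % n) := by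
      intro i
      constructor
      · rw [hLf]
        show L (⟨i % n, _⟩, 0) = L (⟨i % n % n, _⟩, 0)
        congr 2
        exact Fin.ext (Nat.mod_eq_of_lt (Nat.mod_lt _ h0)).symm
      · rw [hLg]
        show L (⟨i % n, _⟩, 1) = L (⟨i % n % n, _⟩, 1)
        congr 2
        exact Fin.ext (Nat.mod_eq_of_lt (Nat.mod_lt _ h0)).symm
    have hunif : ∀ i, Lf i = Lf 0 ∧ Lg i = Lg 0 := by
      intro i
      obtain ⟨h1, h2⟩ := hmodper i
      obtain ⟨h3, h4⟩ := hlt (i % n) (Nat.mod_lt _ h0)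
      exact ⟨h1.trans h3, h2.trans h4⟩
    obtain ⟨P, hP⟩ := exists_cert_unif n hn Lf Lg hLfc hLgc hunif
    have hv : ∀ i : Fin n, (i.val + (n - 0)) % n % n = i.val := by
      intro i
      have hv1 : (i.val + (n - 0)) % n = i.val := by
        rw [show i.val + (n - 0) = i.val + n by omega, Nat.add_mod_right]
        exact Nat.mod_eq_of_lt i.isLt
      rw [hv1]
      exact Nat.mod_eq_of_lt i.isLt
    have hFL : ∀ i : Fin n, Lf ((i.val + (n - 0)) % n) = L (i, 0) := by
      intro i
      show L (⟨(i.val + (n - 0)) % n % n, Nat.mod_lt _ h0⟩, 0) = L (i, 0)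
      have hfin : (⟨(i.val + (n - 0)) % n % n, Nat.mod_lt _ h0⟩ : Fin n) = i :=
        Fin.ext (hv i)
      rw [hfin]
    have hGL : ∀ i : Fin n, Lg ((i.val + (n - 0)) % n) = L (i, 1) := by
      intro i
      show L (⟨(i.val + (n - 0)) % n % n, Nat.mod_lt _ h0⟩, 1) = L (i, 1)
      have hfin : (⟨(i.val + (n - 0)) % n % n, Nat.mod_lt _ h0⟩ : Fin n) = i :=
        Fin.ext (hv i)
      rw [hfin]
    exact transfer n hn L 0 h0 P Lf Lg hFL hGL hP

end PrismAux
/-- If `n ≥ 6`, `L` is a 3-uniform list assignment of `Π_n` and `c` is a lex-min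
proper `L`-coloring of `Π_n`, then every color class of `c` has at most `⌈2n/3⌉`
vertices. -/
theorem lexmin_is_bounded (n : ℕ) (hn : 6 ≤ n)
    (L : Fin n × Fin 2 → Finset ℕ) (hL : ∀ v, (L v).card = 3)
    (c : Fin n × Fin 2 → ℕ) (hc : IsLexMin L c) :
    ∀ k : ℕ, (colorClass c k).card ≤ 2 * n ⌈/⌉ 3 := by
  classical
  intro k
  obtain ⟨c', hc'prop, hc'bound⟩ := PrismAux.exists_good n hn L hL
  have hceil : 2 * (n / 3) + n % 3 = 2 * n ⌈/⌉ 3 := by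
    rw [Nat.ceilDiv_eq_add_pred_div]
    omega
  rw [← hceil]
  have hmem_word : ∀ (f : Fin n × Fin 2 → ℕ) (x : ℕ),
      x ∈ colorWord f ↔ ∃ k0 ∈ Finset.univ.image f, (colorClass f k0).card = x := by
    intro f x
    simp only [colorWord, List.mem_reverse, Multiset.mem_sort, Multiset.mem_map,
      Finset.mem_val]
  have hword_ne : ∀ f : Fin n × Fin 2 → ℕ, colorWord f ≠ [] := by
    intro f
    have hv0 : ((⟨0, by omega⟩, 0) : Fin n × Fin 2) ∈ Finset.univ := Finset.mem_univ _
    have hx : (colorClass f (f (⟨0, by omega⟩, 0))).card ∈ colorWord f := by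
      rw [hmem_word]
      exact ⟨f (⟨0, by omega⟩, 0), Finset.mem_image_of_mem f hv0, rfl⟩
    exact List.ne_nil_of_mem hx
  have hhead : ∀ (f : Fin n × Fin 2 → ℕ) (h : ℕ) (t : List ℕ),
      colorWord f = h :: t → ∀ x ∈ colorWord f, x ≤ h := by
    intro f h t hw x hx
    have hs : (((Finset.univ.image f).val.map fun k0 => (colorClass f k0).card).sort
        (· ≤ ·)).Pairwise
        (· ≤ ·) := by apply Multiset.pairwise_sort
    have hsort_eq : ((Finset.univ.image f).val.map fun k0 => (colorClass f k0).card).sort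
        (· ≤ ·)
        = t.reverse ++ [h] := by
      have h1 : (colorWord f).reverse = t.reverse ++ [h] := by
        rw [hw, List.reverse_cons]
      rw [colorWord, List.reverse_reverse] at h1
      exact h1
    rw [hsort_eq] at hs
    have hx2 : x ∈ t.reverse ++ [h] := by
      rw [← hsort_eq]
      rw [colorWord, List.mem_reverse] at hx
      exact hx
    rw [List.mem_append] at hx2
    rcases hx2 with hx2 | hx2
    · rw [List.pairwise_append] at hs
      exact hs.2.2 x hx2 h (List.mem_singleton_self h)
    · rw [List.mem_singleton] at hx2
      omega
  by_cases hk0 : (colorClass c k).card = 0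
  · rw [hk0]; exact Nat.zero_le _
  obtain ⟨h, t, hw⟩ : ∃ h t, colorWord c = h :: t := by
    cases hwc : colorWord c with
    | nil => exact absurd hwc (hword_ne c)
    | cons h t => exact ⟨h, t, rfl⟩
  obtain ⟨h', t', hw'⟩ : ∃ h' t', colorWord c' = h' :: t' := by
    cases hwc : colorWord c' with
    | nil => exact absurd hwc (hword_ne c')
    | cons h t => exact ⟨h, t, rfl⟩
  have hhh : h ≤ h' := by
    by_contra hcon
    push_neg at hcon
    have hlex : List.Lex (· < ·) (colorWord c') (colorWord c) := by
      rw [hw, hw']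
      exact List.Lex.rel hcon
    exact hc.2 c' hc'prop hlex
  have hh'b : h' ≤ 2 * (n / 3) + n % 3 := by
    have hmem : h' ∈ colorWord c' := by
      rw [hw']; exact List.mem_cons_self
    rw [hmem_word] at hmem
    obtain ⟨k0, _, he⟩ := hmem
    rw [← he]
    exact hc'bound k0
  have hch : (colorClass c k).card ∈ colorWord c := by
    rw [hmem_word]
    refine ⟨k, ?_, rfl⟩
    obtain ⟨v, hv⟩ := Finset.card_pos.mp (by omega : 0 < (colorClass c k).card)
    rw [colorClass, Finset.mem_filter] at hv
    exact Finset.mem_image.mpr ⟨v, Finset.mem_univ v, hv.2⟩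
  have hfinal := hhead c h t hw _ hch
  omega
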